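/- For 0 ≤ a ≤ b, the first-order Marcum Q-function satisfies Q₁(a, b) ≤ exp(−(b−a)²/2). -/

import Mathlib

open MeasureTheory ProbabilityTheory Filter

noncomputable instance (M : ℕ) : MeasureSpace (EuclideanSpace ℂ (Fin M)) where
  volume := (volume : Measure (Fin M → ℂ)).map (WithLp.toLp 2)
instance (M : ℕ) : BorelSpace (EuclideanSpace ℂ (Fin M)) :=
  inferInstance
instance (M : ℕ) : PolishSpace (EuclideanSpace ℂ (Fin M)) :=
  inferInstance

/-- The circularly-symmetric complex Gaussian distribution `CN(μ, v)` on `ℂ`,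
given by the density `z ↦ (π v)⁻¹ exp(-|z-μ|²/v)` w.r.t. Lebesgue measure. -/
noncomputable def cn (μ : ℂ) (v : ℝ) : Measure ℂ :=
  volume.withDensity fun z =>
    ENNReal.ofReal ((Real.pi * v)⁻¹ * Real.exp (-(‖z - μ‖) ^ 2 / v))

/-- The circularly-symmetric complex Gaussian distribution `CN(μ, v • I_M)` on `ℂ^M`. -/
noncomputable def cnVec (M : ℕ) (μ : EuclideanSpace ℂ (Fin M)) (v : ℝ) :
    Measure (EuclideanSpace ℂ (Fin M)) :=
  volume.withDensity fun x =>
    ENNReal.ofReal (((Real.pi * v) ^ M)⁻¹ * Real.exp (-‖x - μ‖ ^ 2 / v))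

/-- The modified Bessel function of the first kind of order zero,
`I₀(x) = ∑ (x/2)^(2n) / (n!)²`. -/
noncomputable def besselI0 (x : ℝ) : ℝ :=
  ∑' n : ℕ, (x / 2) ^ (2 * n) / ((Nat.factorial n : ℝ)) ^ 2

/-- The first-order Marcum Q-function,
`Q₁(a,b) = ∫_b^∞ x exp(−(x²+a²)/2) I₀(ax) dx`. -/
noncomputable def marcumQ1 (a b : ℝ) : ℝ :=
  ∫ x in Set.Ioi b, x * Real.exp (-(x ^ 2 + a ^ 2) / 2) * besselI0 (a * x)

section MarcumAux
open MeasureTheory Real Filter Finset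


-- integrability
lemma aux_integrableOn (m : ℕ) {b : ℝ} (hb : 0 ≤ b) :
    IntegrableOn (fun x : ℝ => x ^ m * Real.exp (-x ^ 2 / 2)) (Set.Ioi b) := by
  have h := integrableOn_rpow_mul_exp_neg_mul_sq (b := 1/2) (by norm_num)
    (s := (m : ℝ)) (by exact_mod_cast neg_one_lt_zero.trans_le (Nat.cast_nonneg m))
  have h' : IntegrableOn (fun x : ℝ => x ^ m * Real.exp (-x ^ 2 / 2)) (Set.Ioi 0) := by
    refine h.congr_fun (fun x _ => ?_) measurableSet_Ioi
    simp only [Real.rpow_natCast]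
    ring_nf
  exact h'.mono_set (Set.Ioi_subset_Ioi hb)

noncomputable def gfun (n : ℕ) (x : ℝ) : ℝ :=
  (2:ℝ) ^ n * (n.factorial : ℝ) *
    (Real.exp (-x ^ 2 / 2) * ∑ k ∈ Finset.range (n+1), (x ^ 2 / 2) ^ k / (k.factorial : ℝ))

lemma gfun_hasDeriv (n : ℕ) (x : ℝ) :
    HasDerivAt (gfun n) (-(x ^ (2*n+1) * Real.exp (-x ^ 2 / 2))) x := by
  have hsq : HasDerivAt (fun x : ℝ => x ^ 2 / 2) x x := by
    simpa using (hasDerivAt_pow 2 x).div_const 2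
  have hE : HasDerivAt (fun x : ℝ => Real.exp (-x ^ 2 / 2)) (-x * Real.exp (-x ^ 2 / 2)) x := by
    have := (hsq.neg).exp
    simpa [neg_div, mul_comm] using this
  have hterm : ∀ k : ℕ, HasDerivAt (fun x : ℝ => (x ^ 2 / 2) ^ k / (k.factorial : ℝ))
      (((k : ℝ) * (x ^ 2 / 2) ^ (k-1) * x) / (k.factorial : ℝ)) x :=
    fun k => (hsq.pow k).div_const _
  have hS : HasDerivAt (fun x : ℝ => ∑ k ∈ Finset.range (n+1), (x ^ 2 / 2) ^ k / (k.factorial : ℝ))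
      (x * ∑ k ∈ Finset.range n, (x ^ 2 / 2) ^ k / (k.factorial : ℝ)) x := by
    have := HasDerivAt.fun_sum (u := Finset.range (n+1)) (fun k _ => hterm k)
    refine this.congr_deriv ?_
    symm
    rw [Finset.sum_range_succ' (fun k => ((k : ℝ) * (x ^ 2 / 2) ^ (k-1) * x) / (k.factorial : ℝ)) n]
    simp only [Nat.cast_zero, zero_mul, pow_zero, Nat.factorial_zero, Nat.cast_one, zero_div,
      add_zero, Nat.add_sub_cancel, Nat.factorial_succ, Nat.cast_mul, Nat.cast_add, Nat.cast_one]
    rw [Finset.mul_sum]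
    refine Finset.sum_congr rfl (fun k _ => ?_)
    have hk : ((k : ℝ) + 1) ≠ 0 := by positivity
    field_simp
  have := ((hE.fun_mul hS).const_mul ((2:ℝ) ^ n * (n.factorial : ℝ)))
  refine this.congr_deriv ?_
  symm
  have hfac : (n.factorial : ℝ) ≠ 0 := by exact_mod_cast n.factorial_ne_zero
  rw [Finset.sum_range_succ]
  have hpow : ((2:ℝ) ^ n * (n.factorial : ℝ)) * ((x ^ 2 / 2) ^ n / (n.factorial : ℝ)) = x ^ (2*n) := by
    rw [div_pow, pow_mul]
    field_simp
  rw [pow_succ, pow_mul] at *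
  field_simp
  ring_nf
  rw [mul_assoc, ← mul_pow]
  norm_num

lemma gfun_tendsto (n : ℕ) : Tendsto (gfun n) atTop (nhds 0) := by
  have hsq : Tendsto (fun x : ℝ => x ^ 2 / 2) atTop atTop :=
    (tendsto_pow_atTop (by norm_num)).atTop_div_const (by norm_num)
  have hterm : ∀ k : ℕ, Tendsto (fun x : ℝ => Real.exp (-x ^ 2 / 2) * ((x ^ 2 / 2) ^ k / (k.factorial : ℝ)))
      atTop (nhds 0) := by
    intro k
    have h1 : Tendsto (fun u : ℝ => u ^ k * Real.exp (-u)) atTop (nhds 0) :=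
      tendsto_pow_mul_exp_neg_atTop_nhds_zero k
    have h2 := h1.comp hsq
    have : (fun x : ℝ => Real.exp (-x ^ 2 / 2) * ((x ^ 2 / 2) ^ k / (k.factorial : ℝ)))
        = fun x : ℝ => ((x ^ 2 / 2) ^ k * Real.exp (-(x ^ 2 / 2))) / (k.factorial : ℝ) := by
      funext x; rw [neg_div]; ring
    rw [this]
    simpa using (h2.div_const (k.factorial : ℝ))
  have : Tendsto (fun x : ℝ => Real.exp (-x ^ 2 / 2) *
      ∑ k ∈ Finset.range (n+1), (x ^ 2 / 2) ^ k / (k.factorial : ℝ)) atTop (nhds 0) := by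
    have := tendsto_finset_sum (Finset.range (n+1)) (fun k _ => hterm k)
    simpa [Finset.mul_sum] using this
  have h := this.const_mul ((2:ℝ) ^ n * (n.factorial : ℝ))
  rw [mul_zero] at h
  exact h

lemma J_eq (n : ℕ) {b : ℝ} (hb : 0 ≤ b) :
    ∫ x in Set.Ioi b, x ^ (2*n+1) * Real.exp (-x ^ 2 / 2) = gfun n b := by
  have h := integral_Ioi_of_hasDerivAt_of_tendsto' (a := b)
    (f := gfun n) (f' := fun x => -(x ^ (2*n+1) * Real.exp (-x ^ 2 / 2)))
    (fun x _ => gfun_hasDeriv n x) ((aux_integrableOn (2*n+1) hb).neg) (gfun_tendsto n)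
  rw [integral_neg] at h
  have := neg_injective (h.trans (by ring))
  linarith [h]

end MarcumAux

set_option maxHeartbeats 1000000 in
/-- exponential upper bound on the Marcum Q-function. For
`0 ≤ a ≤ b`, `Q₁(a, b) ≤ exp(−(b−a)²/2)`. -/
theorem marcumQ1_le_exp (a b : ℝ) (ha : 0 ≤ a) (hab : a ≤ b) :
    marcumQ1 a b ≤ Real.exp (-(b - a) ^ 2 / 2) := by
  have hb : (0:ℝ) ≤ b := ha.trans hab
  set c : ℕ → ℝ := fun n => Real.exp (-a ^ 2 / 2) * ((a/2) ^ (2*n) / (n.factorial : ℝ) ^ 2) with hc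
  set f : ℕ → ℝ → ℝ := fun n x => c n * (x ^ (2*n+1) * Real.exp (-x ^ 2 / 2)) with hf
  have hc_nonneg : ∀ n, 0 ≤ c n := by
    intro n; apply mul_nonneg (Real.exp_pos _).le
    positivity
  have hcoef : ∀ n : ℕ, c n * ((2:ℝ) ^ n * (n.factorial : ℝ))
      = Real.exp (-a ^ 2 / 2) * ((a ^ 2 / 2) ^ n / (n.factorial : ℝ)) := by
    intro n
    have hfac : ((n.factorial : ℝ)) ≠ 0 := by exact_mod_cast n.factorial_ne_zero
    have hpow2 : (a/2) ^ (2*n) * (2:ℝ) ^ n = (a ^ 2 / 2) ^ n := by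
      rw [pow_mul, ← mul_pow]
      congr 1
      ring
    rw [hc, ← hpow2]
    field_simp
  -- pointwise identity of integrand
  have hpt : ∀ x : ℝ, x * Real.exp (-(x ^ 2 + a ^ 2) / 2) * besselI0 (a * x) = ∑' n, f n x := by
    intro x
    rw [besselI0, ← tsum_mul_left]
    refine tsum_congr fun n => ?_
    have hexp : Real.exp (-(x ^ 2 + a ^ 2) / 2) = Real.exp (-x ^ 2 / 2) * Real.exp (-a ^ 2 / 2) := by
      rw [← Real.exp_add]; ring_nf
    simp only [hf, hc]
    rw [hexp]
    have hax : (a * x / 2) ^ (2*n) = (a/2) ^ (2*n) * x ^ (2*n) := by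
      rw [← mul_pow]; ring_nf
    rw [hax]
    ring
  -- integrability of each term
  have hint : ∀ n, IntegrableOn (f n) (Set.Ioi b) := fun n =>
    ((aux_integrableOn (2*n+1) hb).const_mul (c n))
  have hmeas : ∀ n, AEStronglyMeasurable (f n) (volume.restrict (Set.Ioi b)) := fun n =>
    (hint n).aestronglyMeasurable
  -- bound on integrals of norms
  have hint0 : ∀ n, IntegrableOn (f n) (Set.Ioi 0) := fun n =>
    ((aux_integrableOn (2*n+1) le_rfl).const_mul (c n))
  have hf_nonneg : ∀ n, ∀ x : ℝ, 0 < x → 0 ≤ f n x := by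
    intro n x hx
    exact mul_nonneg (hc_nonneg n) (mul_nonneg (pow_nonneg hx.le _) (Real.exp_pos _).le)
  set u : ℕ → ℝ := fun n => Real.exp (-a ^ 2 / 2) * ((a ^ 2 / 2) ^ n / (n.factorial : ℝ)) with hu
  have hJ0 : ∀ n, (∫ x in Set.Ioi (0:ℝ), x ^ (2*n+1) * Real.exp (-x ^ 2 / 2))
      = (2:ℝ) ^ n * (n.factorial : ℝ) := by
    intro n
    rw [J_eq n le_rfl, gfun]
    have : ∑ k ∈ Finset.range (n+1), ((0:ℝ) ^ 2 / 2) ^ k / (k.factorial : ℝ) = 1 := by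
      rw [Finset.sum_eq_single 0] <;> simp +contextual [Nat.pos_iff_ne_zero, zero_pow]
    rw [this]; norm_num
  have hintf0 : ∀ n, (∫ x in Set.Ioi (0:ℝ), f n x) = u n := by
    intro n
    have h1 : (∫ x in Set.Ioi (0:ℝ), f n x)
        = c n * ((2:ℝ) ^ n * (n.factorial : ℝ)) := by
      simp only [hf]
      rw [MeasureTheory.integral_const_mul, hJ0 n]
    rw [h1, hcoef n, hu]
  have hnorm_le : ∀ n, (∫ x in Set.Ioi b, ‖f n x‖) ≤ u n := by
    intro n
    have h1 : (∫ x in Set.Ioi b, ‖f n x‖) ≤ ∫ x in Set.Ioi 0, ‖f n x‖ := by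
      apply setIntegral_mono_set (hint0 n).norm
      · exact Eventually.of_forall fun x => norm_nonneg _
      · exact HasSubset.Subset.eventuallyLE (Set.Ioi_subset_Ioi hb)
    have h2 : (∫ x in Set.Ioi 0, ‖f n x‖) = ∫ x in Set.Ioi 0, f n x := by
      apply setIntegral_congr_fun measurableSet_Ioi
      intro x hx
      exact Real.norm_of_nonneg (hf_nonneg n x hx)
    rw [h2, hintf0 n] at h1
    exact h1
  have hu_summable : Summable u :=
    (Real.summable_pow_div_factorial (a^2/2)).mul_left _
  -- swap integral and sum
  have hswap : marcumQ1 a b = ∑' n, ∫ x in Set.Ioi b, f n x := by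
    rw [marcumQ1]
    rw [show (fun x => x * Real.exp (-(x ^ 2 + a ^ 2) / 2) * besselI0 (a * x)) = fun x => ∑' n, f n x
      from funext hpt] -- might need simp_rw instead
    apply integral_tsum hmeas
    have hv : ∀ n, (∫⁻ x in Set.Ioi b, ‖f n x‖ₑ) = ENNReal.ofReal (∫ x in Set.Ioi b, ‖f n x‖) :=
      fun n => (ofReal_integral_norm_eq_lintegral_enorm (hint n)).symm
    simp_rw [hv]
    have hvsum : Summable (fun n => ∫ x in Set.Ioi b, ‖f n x‖) := by
      refine Summable.of_nonneg_of_le (fun n => ?_) hnorm_le hu_summable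
      exact integral_nonneg fun x => norm_nonneg _
    rw [← ENNReal.ofReal_tsum_of_nonneg (fun n => integral_nonneg fun x => norm_nonneg _) hvsum]
    exact ENNReal.ofReal_ne_top
  -- evaluate each integral
  have hval : ∀ n, (∫ x in Set.Ioi b, f n x)
      = Real.exp (-a ^ 2 / 2) * Real.exp (-b ^ 2 / 2) *
        ((a ^ 2 / 2) ^ n / (n.factorial : ℝ) *
          ∑ k ∈ Finset.range (n+1), (b ^ 2 / 2) ^ k / (k.factorial : ℝ)) := by
    intro n
    have h1 : (∫ x in Set.Ioi b, f n x) = c n * gfun n b := by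
      simp only [hf]
      rw [MeasureTheory.integral_const_mul, J_eq n hb]
    rw [h1, gfun]
    have h2 : c n * ((2:ℝ) ^ n * (n.factorial : ℝ) *
        (Real.exp (-b ^ 2 / 2) * ∑ k ∈ Finset.range (n+1), (b ^ 2 / 2) ^ k / (k.factorial : ℝ)))
        = (c n * ((2:ℝ) ^ n * (n.factorial : ℝ))) *
          (Real.exp (-b ^ 2 / 2) * ∑ k ∈ Finset.range (n+1), (b ^ 2 / 2) ^ k / (k.factorial : ℝ)) := by
      ring
    rw [h2, hcoef n]
    ring
  -- termwise bound
  set w : ℕ → ℝ := fun n => Real.exp (-a ^ 2 / 2) * Real.exp (-b ^ 2 / 2) *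
        ((a ^ 2 / 2) ^ n / (n.factorial : ℝ) *
          ∑ k ∈ Finset.range (n+1), (b ^ 2 / 2) ^ k / (k.factorial : ℝ)) with hw
  have hab2 : (0:ℝ) ≤ a * b / 2 := by positivity
  have hwle : ∀ n, w n ≤ Real.exp (-a ^ 2 / 2) * Real.exp (-b ^ 2 / 2) * Real.exp (a*b/2) *
      ((a*b/2) ^ n / (n.factorial : ℝ)) := by
    intro n
    rw [hw]
    have key : (a ^ 2 / 2) ^ n / (n.factorial : ℝ) *
          ∑ k ∈ Finset.range (n+1), (b ^ 2 / 2) ^ k / (k.factorial : ℝ)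
        ≤ (a*b/2) ^ n / (n.factorial : ℝ) *
          ∑ k ∈ Finset.range (n+1), (a*b/2) ^ k / (k.factorial : ℝ) := by
      rw [Finset.mul_sum, Finset.mul_sum]
      apply Finset.sum_le_sum
      intro k hk
      have hkn : k ≤ n := Nat.lt_succ_iff.mp (Finset.mem_range.mp hk)
      have hmain : (a ^ 2 / 2) ^ n * (b ^ 2 / 2) ^ k ≤ (a*b/2) ^ n * (a*b/2) ^ k := by
        rw [← pow_add]
        have h1 : (a ^ 2 / 2) ^ n * (b ^ 2 / 2) ^ k = (a ^ (2*n) * b ^ (2*k)) / 2 ^ (n+k) := by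
          rw [div_pow, div_pow, pow_mul, pow_mul, pow_add]; ring
        have h2 : (a*b/2) ^ (n+k) = (a ^ (n+k) * b ^ (n+k)) / 2 ^ (n+k) := by
          rw [div_pow, mul_pow]
        rw [h1, h2]
        apply div_le_div_of_nonneg_right ?_ (by positivity)
        · have e1 : 2*n = (n+k) + (n-k) := by omega
          have e2 : n+k = (n-k) + 2*k := by omega
          calc a ^ (2*n) * b ^ (2*k) = a ^ (n+k) * (a ^ (n-k) * b ^ (2*k)) := by
                rw [e1, pow_add]; ring
            _ ≤ a ^ (n+k) * (b ^ (n-k) * b ^ (2*k)) := by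
                refine mul_le_mul_of_nonneg_left ?_ (by positivity)
                exact mul_le_mul_of_nonneg_right (pow_le_pow_left₀ ha hab _) (by positivity)
            _ = a ^ (n+k) * b ^ (n+k) := by
                rw [e2]; ring
      calc (a ^ 2 / 2) ^ n / (n.factorial : ℝ) * ((b ^ 2 / 2) ^ k / (k.factorial : ℝ))
          = ((a ^ 2 / 2) ^ n * (b ^ 2 / 2) ^ k) / ((n.factorial : ℝ) * (k.factorial : ℝ)) := by
            ring
        _ ≤ ((a*b/2) ^ n * (a*b/2) ^ k) / ((n.factorial : ℝ) * (k.factorial : ℝ)) := by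
            apply div_le_div_of_nonneg_right hmain (by positivity)
        _ = (a*b/2) ^ n / (n.factorial : ℝ) * ((a*b/2) ^ k / (k.factorial : ℝ)) := by ring
    have key2 : (a*b/2) ^ n / (n.factorial : ℝ) *
          ∑ k ∈ Finset.range (n+1), (a*b/2) ^ k / (k.factorial : ℝ)
        ≤ (a*b/2) ^ n / (n.factorial : ℝ) * Real.exp (a*b/2) := by
      apply mul_le_mul_of_nonneg_left (Real.sum_le_exp_of_nonneg hab2 _) (by positivity)
    calc Real.exp (-a ^ 2 / 2) * Real.exp (-b ^ 2 / 2) *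
          ((a ^ 2 / 2) ^ n / (n.factorial : ℝ) *
            ∑ k ∈ Finset.range (n+1), (b ^ 2 / 2) ^ k / (k.factorial : ℝ))
        ≤ Real.exp (-a ^ 2 / 2) * Real.exp (-b ^ 2 / 2) *
          ((a*b/2) ^ n / (n.factorial : ℝ) * Real.exp (a*b/2)) := by
          apply mul_le_mul_of_nonneg_left (key.trans key2) (by positivity)
      _ = Real.exp (-a ^ 2 / 2) * Real.exp (-b ^ 2 / 2) * Real.exp (a*b/2) *
          ((a*b/2) ^ n / (n.factorial : ℝ)) := by ring
  have hw_nonneg : ∀ n, 0 ≤ w n := by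
    intro n
    apply mul_nonneg (by positivity)
    apply mul_nonneg (by positivity)
    apply Finset.sum_nonneg
    intro k _
    positivity
  have hRsummable : Summable (fun n => Real.exp (-a ^ 2 / 2) * Real.exp (-b ^ 2 / 2) * Real.exp (a*b/2) *
      ((a*b/2) ^ n / (n.factorial : ℝ))) :=
    (Real.summable_pow_div_factorial (a*b/2)).mul_left _
  have hwsummable : Summable w := Summable.of_nonneg_of_le hw_nonneg hwle hRsummable
  have hfinal : marcumQ1 a b ≤ Real.exp (-a ^ 2 / 2) * Real.exp (-b ^ 2 / 2) * Real.exp (a*b/2) *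
      Real.exp (a*b/2) := by
    rw [hswap]
    have : (∑' n, ∫ x in Set.Ioi b, f n x) = ∑' n, w n := tsum_congr hval
    rw [this]
    calc (∑' n, w n) ≤ ∑' n, Real.exp (-a ^ 2 / 2) * Real.exp (-b ^ 2 / 2) * Real.exp (a*b/2) *
          ((a*b/2) ^ n / (n.factorial : ℝ)) := by exact Summable.tsum_le_tsum hwle hwsummable hRsummable
      _ = Real.exp (-a ^ 2 / 2) * Real.exp (-b ^ 2 / 2) * Real.exp (a*b/2) *
          ∑' n, (a*b/2) ^ n / (n.factorial : ℝ) := tsum_mul_left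
      _ = Real.exp (-a ^ 2 / 2) * Real.exp (-b ^ 2 / 2) * Real.exp (a*b/2) * Real.exp (a*b/2) := by
          rw [Real.exp_eq_exp_ℝ, NormedSpace.exp_eq_tsum_div]
  calc marcumQ1 a b ≤ _ := hfinal
    _ = Real.exp (-(b - a) ^ 2 / 2) := by
        rw [← Real.exp_add, ← Real.exp_add, ← Real.exp_add]
        ring_nf
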